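/- Let (Ω, μ) be a probability space, let ε and ε' be real numbers with 0 < ε < ε', and let (f_n)_{n≥1} be a sequence of measurable functions f_n : Ω → [0, ∞] with ∫ f_n dμ ≤ ε for every n. Then there exists a strictly increasing sequence of natural numbers 0 = k_0 < k_1 < k_2 < ⋯ such that the function φ(ω) = sup_{j≥0} min_{k_j < n ≤ k_{j+1}} f_n(ω) satisfies: (1) liminf_{n→∞} f_n(ω) ≤ φ(ω) for every ω ∈ Ω, and (2) ∫ φ dμ ≤ ε'. -/

import Mathlib

open MeasureTheory
open scoped ENNReal

section Aux

variable {Ω : Type*} [MeasurableSpace Ω]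

private lemma conidis_sup_le_add_tsub {a b c : ℝ≥0∞} (hca : c ≤ a) (hcb : c ≤ b) :
    a ⊔ b ≤ a + (b - c) := by
  refine sup_le le_self_add ?_
  calc b = c + (b - c) := (add_tsub_cancel_of_le hcb).symm
  _ ≤ a + (b - c) := add_le_add hca le_rfl

private lemma conidis_step (μ : Measure Ω) (f : ℕ → Ω → ℝ≥0∞) (hf : ∀ n, Measurable (f n))
    (K : ℕ) (hK : ∫⁻ ω, f (K + 1) ω ∂μ ≠ ∞)
    (g : Ω → ℝ≥0∞) (hg : Measurable g) (hgfin : ∫⁻ ω, g ω ∂μ ≠ ∞)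
    (δ : ℝ≥0∞) (hδ : 0 < δ) :
    ∃ M, K < M ∧ ∫⁻ ω, g ω ⊔ ⨅ n ∈ Set.Ioc K M, f n ω ∂μ ≤
      (∫⁻ ω, g ω ⊔ ⨅ n ∈ Set.Ioi K, f n ω ∂μ) + δ := by
  set G : ℕ → Ω → ℝ≥0∞ := fun i ω => g ω ⊔ ⨅ n ∈ Set.Ioc K (K + 1 + i), f n ω with hG
  have hGmeas : ∀ i, Measurable (G i) := fun i =>
    hg.sup (Measurable.iInf fun n => Measurable.iInf fun _ => hf n)
  have hGanti : Antitone G := by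
    intro i i' hii' ω
    refine sup_le_sup_left ?_ _
    refine le_iInf₂ fun n hn => ?_
    exact iInf₂_le n ⟨hn.1, hn.2.trans (by omega)⟩
  have hGlim : ∀ ω, ⨅ i, G i ω = g ω ⊔ ⨅ n ∈ Set.Ioi K, f n ω := by
    intro ω
    have h1 : ⨅ i, G i ω = g ω ⊔ ⨅ i, ⨅ n ∈ Set.Ioc K (K + 1 + i), f n ω :=
      (sup_iInf_eq _ _).symm
    rw [h1]
    congr 1
    apply le_antisymm
    · refine le_iInf₂ fun n hn => ?_
      refine iInf_le_of_le (n - K) ?_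
      exact iInf₂_le n ⟨hn, by simp only [Set.mem_Ioi] at hn; omega⟩
    · refine le_iInf fun i => le_iInf₂ fun n hn => iInf₂_le n hn.1
  have hG0fin : ∫⁻ ω, G 0 ω ∂μ ≠ ∞ := by
    have hle : ∀ ω, G 0 ω ≤ g ω + f (K + 1) ω := by
      intro ω
      refine sup_le le_self_add ?_
      refine le_trans (iInf₂_le (K + 1) ⟨by omega, by omega⟩) le_add_self
    refine ne_top_of_le_ne_top ?_ (lintegral_mono hle)
    rw [lintegral_add_left hg]
    exact ENNReal.add_ne_top.2 ⟨hgfin, hK⟩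
  have hMCT : ∫⁻ ω, ⨅ i, G i ω ∂μ = ⨅ i, ∫⁻ ω, G i ω ∂μ :=
    lintegral_iInf hGmeas hGanti hG0fin
  have hLfin : ∫⁻ ω, g ω ⊔ ⨅ n ∈ Set.Ioi K, f n ω ∂μ ≠ ∞ := by
    refine ne_top_of_le_ne_top hG0fin (lintegral_mono fun ω => ?_)
    rw [← hGlim ω]; exact iInf_le _ 0
  have hlt : (⨅ i, ∫⁻ ω, G i ω ∂μ) < (∫⁻ ω, g ω ⊔ ⨅ n ∈ Set.Ioi K, f n ω ∂μ) + δ := by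
    rw [← hMCT, lintegral_congr hGlim]
    exact ENNReal.lt_add_right hLfin hδ.ne'
  obtain ⟨i, hi⟩ := iInf_lt_iff.mp hlt
  exact ⟨K + 1 + i, by omega, hi.le⟩

private structure ConSt (Ω : Type*) [MeasurableSpace Ω] (μ : Measure Ω) where
  idx : ℕ
  K : ℕ
  g : Ω → ℝ≥0∞
  meas : Measurable g
  fin : ∫⁻ ω, g ω ∂μ ≠ ∞

variable {μ : Measure Ω} {ε : ℝ} {f : ℕ → Ω → ℝ≥0∞} {δ : ℕ → ℝ≥0∞}

private lemma conidis_fint (hint : ∀ n, 1 ≤ n → ∫⁻ ω, f n ω ∂μ ≤ ENNReal.ofReal ε)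
    (n : ℕ) (hn : 1 ≤ n) : ∫⁻ ω, f n ω ∂μ ≠ ∞ :=
  ne_top_of_le_ne_top ENNReal.ofReal_ne_top (hint n hn)

private lemma conidis_T_int (hint : ∀ n, 1 ≤ n → ∫⁻ ω, f n ω ∂μ ≤ ENNReal.ofReal ε)
    (K : ℕ) : ∫⁻ ω, ⨅ n ∈ Set.Ioi K, f n ω ∂μ ≤ ENNReal.ofReal ε := by
  refine le_trans (lintegral_mono fun ω => ?_) (hint (K + 1) (by omega))
  exact iInf₂_le (K + 1) (by simp)

private noncomputable def conidis_pick (hf : ∀ n, Measurable (f n))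
    (hint : ∀ n, 1 ≤ n → ∫⁻ ω, f n ω ∂μ ≤ ENNReal.ofReal ε)
    (hδ0 : ∀ j, 0 < δ j) (s : ConSt Ω μ) : ℕ :=
  Classical.choose (conidis_step μ f hf s.K (conidis_fint hint (s.K + 1) (by omega))
    s.g s.meas s.fin (δ s.idx) (hδ0 s.idx))

private lemma conidis_pick_spec (hf : ∀ n, Measurable (f n))
    (hint : ∀ n, 1 ≤ n → ∫⁻ ω, f n ω ∂μ ≤ ENNReal.ofReal ε)
    (hδ0 : ∀ j, 0 < δ j) (s : ConSt Ω μ) :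
    s.K < conidis_pick hf hint hδ0 s ∧
    ∫⁻ ω, s.g ω ⊔ ⨅ n ∈ Set.Ioc s.K (conidis_pick hf hint hδ0 s), f n ω ∂μ ≤
      (∫⁻ ω, s.g ω ⊔ ⨅ n ∈ Set.Ioi s.K, f n ω ∂μ) + δ s.idx :=
  Classical.choose_spec (conidis_step μ f hf s.K (conidis_fint hint (s.K + 1) (by omega))
    s.g s.meas s.fin (δ s.idx) (hδ0 s.idx))

private noncomputable def conidis_next (hf : ∀ n, Measurable (f n))
    (hint : ∀ n, 1 ≤ n → ∫⁻ ω, f n ω ∂μ ≤ ENNReal.ofReal ε)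
    (hδ0 : ∀ j, 0 < δ j) (hδfin : ∀ j, δ j ≠ ∞) (s : ConSt Ω μ) : ConSt Ω μ where
  idx := s.idx + 1
  K := conidis_pick hf hint hδ0 s
  g := fun ω => s.g ω ⊔ ⨅ n ∈ Set.Ioc s.K (conidis_pick hf hint hδ0 s), f n ω
  meas := s.meas.sup (Measurable.iInf fun n => Measurable.iInf fun _ => hf n)
  fin := by
    refine ne_top_of_le_ne_top ?_ (conidis_pick_spec hf hint hδ0 s).2
    refine ENNReal.add_ne_top.2 ⟨?_, hδfin s.idx⟩
    refine ne_top_of_le_ne_top ?_ (lintegral_mono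
      (fun ω => (sup_le le_self_add le_add_self :
        s.g ω ⊔ (⨅ n ∈ Set.Ioi s.K, f n ω) ≤ s.g ω + ⨅ n ∈ Set.Ioi s.K, f n ω)))
    rw [lintegral_add_left s.meas]
    exact ENNReal.add_ne_top.2 ⟨s.fin,
      ne_top_of_le_ne_top ENNReal.ofReal_ne_top (conidis_T_int hint s.K)⟩

private noncomputable def conidis_seq (hf : ∀ n, Measurable (f n))
    (hint : ∀ n, 1 ≤ n → ∫⁻ ω, f n ω ∂μ ≤ ENNReal.ofReal ε)
    (hδ0 : ∀ j, 0 < δ j) (hδfin : ∀ j, δ j ≠ ∞) (j : ℕ) : ConSt Ω μ :=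
  (conidis_next hf hint hδ0 hδfin)^[j] ⟨0, 0, fun _ => 0, measurable_const, by simp⟩

end Aux

theorem conidis_functions {Ω : Type*} [MeasurableSpace Ω] (μ : Measure Ω)
    [IsProbabilityMeasure μ]
    (ε ε' : ℝ) (hε : 0 < ε) (hεε' : ε < ε')
    (f : ℕ → Ω → ℝ≥0∞) (hf : ∀ n, Measurable (f n))
    (hint : ∀ n, 1 ≤ n → ∫⁻ ω, f n ω ∂μ ≤ ENNReal.ofReal ε) :
    ∃ k : ℕ → ℕ, k 0 = 0 ∧ StrictMono k ∧
      (∀ ω, Filter.liminf (fun n => f n ω) Filter.atTop ≤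
        ⨆ j, ⨅ n ∈ Set.Ioc (k j) (k (j + 1)), f n ω) ∧
      ∫⁻ ω, (⨆ j, ⨅ n ∈ Set.Ioc (k j) (k (j + 1)), f n ω) ∂μ ≤ ENNReal.ofReal ε' := by
  classical
  set c : ℝ≥0∞ := ENNReal.ofReal (ε' - ε) with hc
  have hc0 : 0 < c := ENNReal.ofReal_pos.2 (by linarith)
  have hcfin : c ≠ ∞ := ENNReal.ofReal_ne_top
  set δ : ℕ → ℝ≥0∞ := fun j => c / 2 ^ (j + 1) with hδ
  have hδ0 : ∀ j, 0 < δ j := fun j =>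
    ENNReal.div_pos hc0.ne' (by simp)
  have hδfin : ∀ j, δ j ≠ ∞ := fun j => by
    simp only [hδ]
    exact (ENNReal.div_lt_top hcfin (by positivity)).ne
  -- the machine
  set s : ℕ → ConSt Ω μ := conidis_seq hf hint hδ0 hδfin with hs
  set k : ℕ → ℕ := fun j => (s j).K with hk
  have hsucc : ∀ j, s (j + 1) = conidis_next hf hint hδ0 hδfin (s j) := by
    intro j
    simp only [hs, conidis_seq, Function.iterate_succ_apply']
  have hidx : ∀ j, (s j).idx = j := by
    intro j
    induction j with
    | zero => rfl
    | succ j ih => rw [hsucc j]; simp [conidis_next, ih]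
  have hkmono : ∀ j, k j < k (j + 1) := by
    intro j
    show (s j).K < (s (j+1)).K
    rw [hsucc j]
    exact (conidis_pick_spec hf hint hδ0 (s j)).1
  have hgsucc : ∀ j, (s (j + 1)).g =
      fun ω => (s j).g ω ⊔ ⨅ n ∈ Set.Ioc (k j) (k (j + 1)), f n ω := by
    intro j
    have hK1 : k (j + 1) = conidis_pick hf hint hδ0 (s j) := by
      show (s (j+1)).K = _
      rw [hsucc j]; rfl
    rw [hsucc j, hK1]
    rfl
  have hgint : ∀ j, ∫⁻ ω, (s (j + 1)).g ω ∂μ ≤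
      (∫⁻ ω, (s j).g ω ⊔ ⨅ n ∈ Set.Ioi (k j), f n ω ∂μ) + δ j := by
    intro j
    rw [hgsucc j]
    have h := (conidis_pick_spec hf hint hδ0 (s j)).2
    rw [hidx j] at h
    have hK1 : k (j + 1) = conidis_pick hf hint hδ0 (s j) := by
      show (s (j+1)).K = _
      rw [hsucc j]; rfl
    rw [hK1]
    exact h
  -- basic facts about tail infima
  have hTmeas : ∀ K : ℕ, Measurable (fun ω => ⨅ n ∈ Set.Ioi K, f n ω) := fun K =>
    Measurable.iInf fun n => Measurable.iInf fun _ => hf n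
  have hTmono : ∀ (K K' : ℕ), K ≤ K' → ∀ ω,
      (⨅ n ∈ Set.Ioi K, f n ω) ≤ ⨅ n ∈ Set.Ioi K', f n ω := by
    intro K K' hKK' ω
    refine le_iInf₂ fun n hn => iInf₂_le n ?_
    simp only [Set.mem_Ioi] at hn ⊢; omega
  have hTg : ∀ j ω, (⨅ n ∈ Set.Ioi (k j), f n ω) ≤ (s (j + 1)).g ω := by
    intro j ω
    rw [hgsucc j]
    refine le_trans ?_ le_sup_right
    refine le_iInf₂ fun n hn => iInf₂_le n hn.1
  -- the invariant
  have hInv : ∀ j, ∫⁻ ω, (s (j + 1)).g ω ∂μ ≤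
      (∫⁻ ω, ⨅ n ∈ Set.Ioi (k j), f n ω ∂μ) + ∑ i ∈ Finset.range (j + 1), δ i := by
    intro j
    induction j with
    | zero =>
      refine le_trans (hgint 0) ?_
      have h0 : (fun ω => (s 0).g ω ⊔ ⨅ n ∈ Set.Ioi (k 0), f n ω) =
          fun ω => ⨅ n ∈ Set.Ioi (k 0), f n ω := by
        funext ω
        have : (s 0).g ω = 0 := rfl
        rw [this, bot_eq_zero.symm, bot_sup_eq]
      rw [h0, Finset.sum_range_one]
    | succ j ih =>
      calc ∫⁻ ω, (s (j + 2)).g ω ∂μ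
          ≤ (∫⁻ ω, (s (j + 1)).g ω ⊔ ⨅ n ∈ Set.Ioi (k (j + 1)), f n ω ∂μ) + δ (j + 1) :=
            hgint (j + 1)
        _ ≤ (∫⁻ ω, (s (j + 1)).g ω +
              ((⨅ n ∈ Set.Ioi (k (j + 1)), f n ω) - ⨅ n ∈ Set.Ioi (k j), f n ω) ∂μ)
              + δ (j + 1) := by
            refine add_le_add (lintegral_mono fun ω => ?_) le_rfl
            exact conidis_sup_le_add_tsub (hTg j ω) (hTmono _ _ (hkmono j).le ω)
        _ = ((∫⁻ ω, (s (j + 1)).g ω ∂μ) +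
              ∫⁻ ω, (⨅ n ∈ Set.Ioi (k (j + 1)), f n ω) - ⨅ n ∈ Set.Ioi (k j), f n ω ∂μ)
              + δ (j + 1) := by
            rw [lintegral_add_left (s (j + 1)).meas]
        _ ≤ (((∫⁻ ω, ⨅ n ∈ Set.Ioi (k j), f n ω ∂μ) + ∑ i ∈ Finset.range (j + 1), δ i) +
              ∫⁻ ω, (⨅ n ∈ Set.Ioi (k (j + 1)), f n ω) - ⨅ n ∈ Set.Ioi (k j), f n ω ∂μ)
              + δ (j + 1) := by
            exact add_le_add (add_le_add ih le_rfl) le_rfl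
        _ = ((∫⁻ ω, ⨅ n ∈ Set.Ioi (k j), f n ω ∂μ) +
              ∫⁻ ω, (⨅ n ∈ Set.Ioi (k (j + 1)), f n ω) - ⨅ n ∈ Set.Ioi (k j), f n ω ∂μ)
              + (∑ i ∈ Finset.range (j + 1), δ i + δ (j + 1)) := by ring
        _ = (∫⁻ ω, ⨅ n ∈ Set.Ioi (k (j + 1)), f n ω ∂μ) +
              ∑ i ∈ Finset.range (j + 2), δ i := by
            rw [Finset.sum_range_succ δ (j + 1)]
            congr 1
            rw [← lintegral_add_left (hTmeas (k j))]
            refine lintegral_congr fun ω => ?_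
            exact add_tsub_cancel_of_le (hTmono _ _ (hkmono j).le ω)
  -- bound on the sum of the δ's
  have hsum : ∀ j, ∑ i ∈ Finset.range (j + 1), δ i ≤ c := by
    intro j
    refine le_trans (ENNReal.sum_le_tsum _) ?_
    have h1 : ∀ i : ℕ, δ i = c * 2⁻¹ ^ (i + 1) := by
      intro i
      rw [hδ]
      simp only [div_eq_mul_inv, ← ENNReal.inv_pow]
    calc ∑' i, δ i = ∑' i, c * (2⁻¹ * 2⁻¹ ^ i) := by
          refine tsum_congr fun i => ?_
          rw [h1 i, pow_succ, mul_comm (2⁻¹ ^ i) 2⁻¹]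
      _ = c * 2⁻¹ * ∑' i : ℕ, 2⁻¹ ^ i := by
          rw [ENNReal.tsum_mul_left, ENNReal.tsum_mul_left, mul_assoc]
      _ = c * 2⁻¹ * 2 := by
          rw [ENNReal.tsum_geometric]
          congr 1
          rw [ENNReal.one_sub_inv_two, inv_inv]
      _ ≤ c := by
          rw [mul_assoc, ENNReal.inv_mul_cancel (by norm_num) (by norm_num), mul_one]
  -- StrictMono
  have hkSM : StrictMono k := strictMono_nat_of_lt_succ hkmono
  refine ⟨k, rfl, hkSM, ?_, ?_⟩
  · -- liminf bound
    intro ω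
    rw [Filter.liminf_eq_iSup_iInf_of_nat]
    refine iSup_le fun N => le_iSup_of_le N (le_iInf₂ fun n hn => ?_)
    refine iInf₂_le n ?_
    have h1 : N ≤ k N := hkSM.le_apply
    have h2 : k N < n := hn.1
    omega
  · -- integral bound
    have hφeq : (fun ω => ⨆ j, ⨅ n ∈ Set.Ioc (k j) (k (j + 1)), f n ω) =
        fun ω => ⨆ j, (s j).g ω := by
      funext ω
      apply le_antisymm
      · refine iSup_le fun j => le_iSup_of_le (j + 1) ?_
        rw [hgsucc j]
        exact le_sup_right
      · refine iSup_le fun j => ?_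
        induction j with
        | zero => exact zero_le
        | succ j ih =>
          rw [hgsucc j]
          exact sup_le ih (le_iSup (fun j => ⨅ n ∈ Set.Ioc (k j) (k (j + 1)), f n ω) j)
    rw [hφeq]
    have hmono : Monotone fun j => (s j).g := by
      refine monotone_nat_of_le_succ fun j ω => ?_
      rw [hgsucc j]
      exact le_sup_left
    rw [lintegral_iSup (fun j => (s j).meas) hmono]
    refine iSup_le fun j => ?_
    cases j with
    | zero =>
      have : (s 0).g = fun _ => (0 : ℝ≥0∞) := rfl
      rw [this]
      simp
    | succ j =>
      refine le_trans (hInv j) ?_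
      have h1 : ∫⁻ ω, ⨅ n ∈ Set.Ioi (k j), f n ω ∂μ ≤ ENNReal.ofReal ε :=
        conidis_T_int hint (k j)
      refine le_trans (add_le_add h1 (hsum j)) ?_
      rw [hc, ← ENNReal.ofReal_add hε.le (by linarith)]
      apply le_of_eq
      congr 1
      ring
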